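/- Let A be an associative unital algebra over ℂ with a full comultiplication Δ, and assume there exist a faithful left integral φ and a faithful right integral on A. If elements a₁, …, aₙ, b₁, …, bₙ ∈ A satisfy Σᵢ (id ⊗ φ)(Δ(aᵢ)(1 ⊗ bᵢ)) = 0, then Σᵢ (id ⊗ φ)((1 ⊗ aᵢ)Δ(bᵢ)) = 0. -/

import Mathlib

open TensorProduct

noncomputable section

variable {A : Type*} [Ring A] [Algebra ℂ A]

/-- The slice map `id ⊗ ω : A ⊗ A → A`. -/
def sliceR (ω : A →ₗ[ℂ] ℂ) : A ⊗[ℂ] A →ₗ[ℂ] A :=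
  (TensorProduct.rid ℂ A).toLinearMap ∘ₗ TensorProduct.map LinearMap.id ω

/-- The slice map `ω ⊗ id : A ⊗ A → A`. -/
def sliceL (ω : A →ₗ[ℂ] ℂ) : A ⊗[ℂ] A →ₗ[ℂ] A :=
  (TensorProduct.lid ℂ A).toLinearMap ∘ₗ TensorProduct.map ω LinearMap.id

/-- Coassociativity of a comultiplication `Δ : A → A ⊗ A`:
`(Δ ⊗ id) ∘ Δ = (id ⊗ Δ) ∘ Δ` (up to the associator). -/
def IsCoassoc (Δ : A →ₐ[ℂ] A ⊗[ℂ] A) : Prop :=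
  ∀ a : A,
    TensorProduct.assoc ℂ A A A (TensorProduct.map Δ.toLinearMap LinearMap.id (Δ a)) =
      TensorProduct.map LinearMap.id Δ.toLinearMap (Δ a)

/-- A left integral: a nonzero functional with `(id ⊗ φ)(Δ a) = φ(a)·1` for all `a`. -/
def IsLeftIntegral (Δ : A →ₐ[ℂ] A ⊗[ℂ] A) (φ : A →ₗ[ℂ] ℂ) : Prop :=
  φ ≠ 0 ∧ ∀ a : A, sliceR φ (Δ a) = φ a • (1 : A)

/-- A right integral: a nonzero functional with `(ψ ⊗ id)(Δ a) = ψ(a)·1` for all `a`. -/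
def IsRightIntegral (Δ : A →ₐ[ℂ] A ⊗[ℂ] A) (ψ : A →ₗ[ℂ] ℂ) : Prop :=
  ψ ≠ 0 ∧ ∀ a : A, sliceL ψ (Δ a) = ψ a • (1 : A)

/-- A faithful functional: the bilinear form `(a, b) ↦ ω(ab)` is non-degenerate. -/
def IsFaithful (ω : A →ₗ[ℂ] ℂ) : Prop :=
  (∀ b : A, (∀ a : A, ω (a * b) = 0) → b = 0) ∧
  (∀ b : A, (∀ a : A, ω (b * a) = 0) → b = 0)

/-- The left leg of an element `x ∈ A ⊗ A`: the span of `{(id ⊗ ω)(x) : ω ∈ A*}`. -/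
def leftLegOf (x : A ⊗[ℂ] A) : Submodule ℂ A :=
  Submodule.span ℂ {y : A | ∃ ω : A →ₗ[ℂ] ℂ, y = sliceR ω x}

/-- The right leg of an element `x ∈ A ⊗ A`: the span of `{(ω ⊗ id)(x) : ω ∈ A*}`. -/
def rightLegOf (x : A ⊗[ℂ] A) : Submodule ℂ A :=
  Submodule.span ℂ {y : A | ∃ ω : A →ₗ[ℂ] ℂ, y = sliceL ω x}

/-- The left leg of `Δ`: the span of `{(id ⊗ ω)(Δ a) : a ∈ A, ω ∈ A*}`. -/
def leftLeg (Δ : A →ₐ[ℂ] A ⊗[ℂ] A) : Submodule ℂ A :=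
  Submodule.span ℂ {y : A | ∃ (a : A) (ω : A →ₗ[ℂ] ℂ), y = sliceR ω (Δ a)}

/-- The right leg of `Δ`: the span of `{(ω ⊗ id)(Δ a) : a ∈ A, ω ∈ A*}`. -/
def rightLeg (Δ : A →ₐ[ℂ] A ⊗[ℂ] A) : Submodule ℂ A :=
  Submodule.span ℂ {y : A | ∃ (a : A) (ω : A →ₗ[ℂ] ℂ), y = sliceL ω (Δ a)}

/-- A comultiplication is full if both of its legs are all of `A`. -/
def IsFull (Δ : A →ₐ[ℂ] A ⊗[ℂ] A) : Prop :=
  leftLeg Δ = ⊤ ∧ rightLeg Δ = ⊤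

/-- The linear map `T₁` with `T₁ (a ⊗ b) = Δ(a) * (1 ⊗ b)`. -/
def T1 (Δ : A →ₐ[ℂ] A ⊗[ℂ] A) : A ⊗[ℂ] A →ₗ[ℂ] A ⊗[ℂ] A :=
  LinearMap.mul' ℂ (A ⊗[ℂ] A) ∘ₗ
    TensorProduct.map Δ.toLinearMap (TensorProduct.mk ℂ A A 1)

/-- The linear map `T₁'` with `T₁' (a ⊗ b) = Δ(a) * (b ⊗ 1)`. -/
def T1' (Δ : A →ₐ[ℂ] A ⊗[ℂ] A) : A ⊗[ℂ] A →ₗ[ℂ] A ⊗[ℂ] A :=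
  LinearMap.mul' ℂ (A ⊗[ℂ] A) ∘ₗ
    TensorProduct.map Δ.toLinearMap ((TensorProduct.mk ℂ A A).flip 1)

/-- The linear map `T₂` with `T₂ (a ⊗ b) = (a ⊗ 1) * Δ(b)`. -/
def T2 (Δ : A →ₐ[ℂ] A ⊗[ℂ] A) : A ⊗[ℂ] A →ₗ[ℂ] A ⊗[ℂ] A :=
  LinearMap.mul' ℂ (A ⊗[ℂ] A) ∘ₗ
    TensorProduct.map ((TensorProduct.mk ℂ A A).flip 1) Δ.toLinearMap

/-- The linear map `T₂'` with `T₂' (a ⊗ b) = (1 ⊗ a) * Δ(b)`. -/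
def T2' (Δ : A →ₐ[ℂ] A ⊗[ℂ] A) : A ⊗[ℂ] A →ₗ[ℂ] A ⊗[ℂ] A :=
  LinearMap.mul' ℂ (A ⊗[ℂ] A) ∘ₗ
    TensorProduct.map (TensorProduct.mk ℂ A A 1) Δ.toLinearMap

/-- A left cointegral: a nonzero element `h` with `Δ(a)(1 ⊗ h) = a ⊗ h` for all `a`. -/
def IsLeftCointegral (Δ : A →ₐ[ℂ] A ⊗[ℂ] A) (h : A) : Prop :=
  h ≠ 0 ∧ ∀ a : A, Δ a * ((1 : A) ⊗ₜ[ℂ] h) = a ⊗ₜ[ℂ] h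

/-- A right cointegral: a nonzero element `k` with `(k ⊗ 1)Δ(a) = k ⊗ a` for all `a`. -/
def IsRightCointegral (Δ : A →ₐ[ℂ] A ⊗[ℂ] A) (k : A) : Prop :=
  k ≠ 0 ∧ ∀ a : A, (k ⊗ₜ[ℂ] (1 : A)) * Δ a = k ⊗ₜ[ℂ] a

/-- `Δ₁₃(a) = (1 ⊗ σ)(Δ(a) ⊗ 1)`, viewed in `A ⊗ (A ⊗ A)`. -/
def delta13 (Δ : A →ₐ[ℂ] A ⊗[ℂ] A) (a : A) : A ⊗[ℂ] (A ⊗[ℂ] A) :=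
  TensorProduct.map LinearMap.id (TensorProduct.comm ℂ A A).toLinearMap
    (TensorProduct.assoc ℂ A A A (Δ a ⊗ₜ[ℂ] (1 : A)))


/-! ### Auxiliary machinery for the proof -/

section WDAux

variable {A : Type*} [Ring A] [Algebra ℂ A]

@[simp] lemma wd_sliceR_tmul (ω : A →ₗ[ℂ] ℂ) (x y : A) :
    sliceR ω (x ⊗ₜ[ℂ] y) = ω y • x := by
  simp [sliceR]

@[simp] lemma wd_sliceL_tmul (ω : A →ₗ[ℂ] ℂ) (x y : A) :
    sliceL ω (x ⊗ₜ[ℂ] y) = ω x • y := by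
  simp [sliceL]

/-- The scalar pairing `(ω ⊗ θ)`. -/
def wdPair (ω θ : A →ₗ[ℂ] ℂ) : A ⊗[ℂ] A →ₗ[ℂ] ℂ :=
  LinearMap.mul' ℂ ℂ ∘ₗ TensorProduct.map ω θ

@[simp] lemma wdPair_tmul (ω θ : A →ₗ[ℂ] ℂ) (x y : A) :
    wdPair ω θ (x ⊗ₜ[ℂ] y) = ω x * θ y := by
  simp [wdPair]

lemma wdPair_eq_sliceR (ω θ : A →ₗ[ℂ] ℂ) (t : A ⊗[ℂ] A) :
    wdPair ω θ t = ω (sliceR θ t) := by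
  induction t using TensorProduct.induction_on with
  | zero => simp
  | tmul x y => simp [mul_comm]
  | add x y hx hy => simp [hx, hy]

lemma wdPair_mulLeft (ψ θ : A →ₗ[ℂ] ℂ) (c : A) (t : A ⊗[ℂ] A) :
    wdPair ψ θ (((c : A) ⊗ₜ[ℂ] (1 : A)) * t) = wdPair (ψ ∘ₗ LinearMap.mulLeft ℂ c) θ t := by
  induction t using TensorProduct.induction_on with
  | zero => simp
  | tmul x y => simp [Algebra.TensorProduct.tmul_mul_tmul]
  | add x y hx hy => simp [mul_add, hx, hy]

/-- `(ψ ⊗ φ)((c⊗1)·t) = ψ(c · (id⊗φ)(t))`.  (L0) -/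
lemma wd_L0 (ψ θ : A →ₗ[ℂ] ℂ) (c : A) (t : A ⊗[ℂ] A) :
    wdPair ψ θ ((c ⊗ₜ[ℂ] (1 : A)) * t) = ψ (c * sliceR θ t) := by
  rw [wdPair_mulLeft, wdPair_eq_sliceR]
  simp

lemma wd_sliceL_mulLeft (ψ : A →ₗ[ℂ] ℂ) (p : A) (t : A ⊗[ℂ] A) :
    sliceL ψ ((p ⊗ₜ[ℂ] (1 : A)) * t) = sliceL (ψ ∘ₗ LinearMap.mulLeft ℂ p) t := by
  induction t using TensorProduct.induction_on with
  | zero => simp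
  | tmul x y => simp [Algebra.TensorProduct.tmul_mul_tmul]
  | add x y hx hy => simp [mul_add, hx, hy]

end WDAux

section WDAux2

variable {A : Type*} [Ring A] [Algebra ℂ A]

/-- `S₁ := (sliceL ψ) ⊗ id : (A⊗A)⊗A → A⊗A`. -/
def wdS1 (ψ : A →ₗ[ℂ] ℂ) : (A ⊗[ℂ] A) ⊗[ℂ] A →ₗ[ℂ] A ⊗[ℂ] A :=
  TensorProduct.map (sliceL ψ) LinearMap.id

@[simp] lemma wdS1_tmul (ψ : A →ₗ[ℂ] ℂ) (t : A ⊗[ℂ] A) (w : A) :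
    wdS1 ψ (t ⊗ₜ[ℂ] w) = sliceL ψ t ⊗ₜ[ℂ] w := by
  simp [wdS1]

/-- K1: `S₁((Δ⊗id)t) = 1 ⊗ sliceL ψ t`, using right invariance of `ψ`. -/
lemma wd_K1 (Δ : A →ₐ[ℂ] A ⊗[ℂ] A) (ψ : A →ₗ[ℂ] ℂ)
    (hs : ∀ z : A, sliceL ψ (Δ z) = ψ z • (1 : A)) (t : A ⊗[ℂ] A) :
    wdS1 ψ (TensorProduct.map Δ.toLinearMap LinearMap.id t) = (1 : A) ⊗ₜ[ℂ] sliceL ψ t := by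
  induction t using TensorProduct.induction_on with
  | zero => simp
  | tmul z w =>
      rw [map_tmul, wdS1_tmul, AlgHom.toLinearMap_apply, hs z, smul_tmul]
      simp
  | add x y hx hy => simp [hx, hy, tmul_add]

/-- K1': `(Δ⊗id)((p⊗1)·t) = (Δp⊗1)·(Δ⊗id)(t)`. -/
lemma wd_K1' (Δ : A →ₐ[ℂ] A ⊗[ℂ] A) (p : A) (t : A ⊗[ℂ] A) :
    TensorProduct.map Δ.toLinearMap LinearMap.id ((p ⊗ₜ[ℂ] (1 : A)) * t)
      = (Δ p ⊗ₜ[ℂ] (1 : A)) * TensorProduct.map Δ.toLinearMap LinearMap.id t := by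
  induction t using TensorProduct.induction_on with
  | zero => simp
  | tmul z w =>
      simp [Algebra.TensorProduct.tmul_mul_tmul, map_mul]
  | add x y hx hy => simp [mul_add, hx, hy]

/-- K4: evaluating `S₁(((x⊗y)⊗1)·assoc⁻¹(z⊗s))`. -/
lemma wd_K4 (ψ : A →ₗ[ℂ] ℂ) (x y z : A) (s : A ⊗[ℂ] A) :
    wdS1 ψ (((x ⊗ₜ[ℂ] y) ⊗ₜ[ℂ] (1 : A)) *
        (TensorProduct.assoc ℂ A A A).symm (z ⊗ₜ[ℂ] s))
      = ψ (x * z) • ((y ⊗ₜ[ℂ] (1 : A)) * s) := by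
  induction s using TensorProduct.induction_on with
  | zero =>
      rw [TensorProduct.tmul_zero, (TensorProduct.assoc ℂ A A A).symm.map_zero,
        mul_zero, map_zero, mul_zero, smul_zero]
  | tmul u v =>
      rw [TensorProduct.assoc_symm_tmul]
      simp [Algebra.TensorProduct.tmul_mul_tmul, smul_tmul']
  | add s1 s2 h1 h2 =>
      rw [TensorProduct.tmul_add, (TensorProduct.assoc ℂ A A A).symm.map_add,
        mul_add, map_add, h1, h2, mul_add, smul_add]

/-- The bilinear gadget `Ĥ : (x⊗y) ↦ (g ↦ ψ(x·g)·ψ(c·y))`. -/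
def wdH (ψ : A →ₗ[ℂ] ℂ) (c : A) : A ⊗[ℂ] A →ₗ[ℂ] A →ₗ[ℂ] ℂ :=
  TensorProduct.lift
    (LinearMap.mk₂ ℂ (fun x y => ψ (c * y) • (ψ ∘ₗ LinearMap.mulLeft ℂ x))
      (fun x₁ x₂ y => by ext g; simp [add_mul, mul_add]; try ring)
      (fun r x y => by ext g; simp [smul_mul_assoc, smul_smul]; try ring)
      (fun x y₁ y₂ => by ext g; simp [mul_add, add_smul]; try ring)
      (fun r x y => by ext g; simp [mul_smul_comm, smul_smul]; try ring))

@[simp] lemma wdH_tmul (ψ : A →ₗ[ℂ] ℂ) (c x y g : A) :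
    wdH ψ c (x ⊗ₜ[ℂ] y) g = ψ (c * y) * ψ (x * g) := by
  simp [wdH, mul_comm]

end WDAux2


section WDAux3

variable {A : Type*} [Ring A] [Algebra ℂ A]

/-- K3: the key two-sided evaluation, using left invariance of `φ`. -/
lemma wd_K3 (Δ : A →ₐ[ℂ] A ⊗[ℂ] A) (φ ψ : A →ₗ[ℂ] ℂ)
    (hl : ∀ z : A, sliceR φ (Δ z) = φ z • (1 : A))
    (c d : A) (P : A ⊗[ℂ] A) (t : A ⊗[ℂ] A) :
    wdPair ψ φ ((c ⊗ₜ[ℂ] (1:A)) *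
        wdS1 ψ ((P ⊗ₜ[ℂ] (1:A)) *
          (TensorProduct.assoc ℂ A A A).symm (TensorProduct.map LinearMap.id Δ.toLinearMap t)) *
        Δ d)
      = wdH ψ c P (sliceR φ (t * ((1:A) ⊗ₜ[ℂ] d))) := by
  induction t using TensorProduct.induction_on with
  | zero =>
      rw [map_zero, (TensorProduct.assoc ℂ A A A).symm.map_zero, mul_zero, map_zero,
        mul_zero, zero_mul, map_zero, zero_mul, map_zero, map_zero]
  | tmul z w =>
      rw [map_tmul, LinearMap.id_coe, id_eq, AlgHom.toLinearMap_apply]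
      induction P using TensorProduct.induction_on with
      | zero =>
          rw [TensorProduct.zero_tmul, zero_mul, map_zero, mul_zero, zero_mul, map_zero,
            map_zero, LinearMap.zero_apply]
      | tmul x y =>
          rw [wd_K4, mul_smul_comm, smul_mul_assoc, map_smul]
          rw [show (c ⊗ₜ[ℂ] (1:A)) * ((y ⊗ₜ[ℂ] (1:A)) * Δ w) = ((c*y) ⊗ₜ[ℂ] (1:A)) * Δ w by
                rw [← mul_assoc, Algebra.TensorProduct.tmul_mul_tmul, one_mul]]
          rw [mul_assoc, ← map_mul, wd_L0, hl]
          rw [Algebra.TensorProduct.tmul_mul_tmul, mul_one, wd_sliceR_tmul, map_smul, wdH_tmul]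
          simp only [smul_eq_mul, mul_smul_comm, mul_one, map_smul]
          ring
      | add P1 P2 h1 h2 =>
          rw [TensorProduct.add_tmul, add_mul, map_add, mul_add, add_mul, map_add, h1, h2,
            map_add, LinearMap.add_apply]
  | add t1 t2 h1 h2 =>
      rw [map_add, (TensorProduct.assoc ℂ A A A).symm.map_add, mul_add, map_add, mul_add,
        add_mul, map_add, h1, h2, add_mul, map_add, map_add]

end WDAux3


section WDAux4

variable {A : Type*} [Ring A] [Algebra ℂ A]

lemma wd_coassoc_symm (Δ : A →ₐ[ℂ] A ⊗[ℂ] A) (hco : IsCoassoc Δ) (z : A) :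
    TensorProduct.map Δ.toLinearMap LinearMap.id (Δ z)
      = (TensorProduct.assoc ℂ A A A).symm
          (TensorProduct.map LinearMap.id Δ.toLinearMap (Δ z)) := by
  rw [← hco z, LinearEquiv.symm_apply_apply]

/-- Step A: the conclusion holds for the `ψ(p·)`-sliced families. -/
lemma wd_StepA (Δ : A →ₐ[ℂ] A ⊗[ℂ] A) (hco : IsCoassoc Δ) (φ ψ : A →ₗ[ℂ] ℂ)
    (hl : ∀ z : A, sliceR φ (Δ z) = φ z • (1 : A))
    (hr : ∀ z : A, sliceL ψ (Δ z) = ψ z • (1 : A))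
    (n : ℕ) (a b : Fin n → A)
    (h0 : ∑ i, sliceR φ (Δ (a i) * ((1 : A) ⊗ₜ[ℂ] b i)) = 0) (c p : A) :
    ∑ i, wdPair ψ φ ((c ⊗ₜ[ℂ] sliceL ψ ((p ⊗ₜ[ℂ] (1:A)) * Δ (a i))) * Δ (b i)) = 0 := by
  have key : ∀ i, wdPair ψ φ ((c ⊗ₜ[ℂ] sliceL ψ ((p ⊗ₜ[ℂ] (1:A)) * Δ (a i))) * Δ (b i))
      = wdH ψ c (Δ p) (sliceR φ (Δ (a i) * ((1:A) ⊗ₜ[ℂ] b i))) := by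
    intro i
    have h1 : (c ⊗ₜ[ℂ] sliceL ψ ((p ⊗ₜ[ℂ] (1:A)) * Δ (a i)))
        = (c ⊗ₜ[ℂ] (1:A)) * ((1:A) ⊗ₜ[ℂ] sliceL ψ ((p ⊗ₜ[ℂ] (1:A)) * Δ (a i))) := by
      rw [Algebra.TensorProduct.tmul_mul_tmul, mul_one, one_mul]
    rw [h1, ← wd_K1 Δ ψ hr, wd_K1', wd_coassoc_symm Δ hco, wd_K3 Δ φ ψ hl]
  rw [Finset.sum_congr rfl fun i _ => key i, ← map_sum, h0, map_zero]

/-- Step B: the sliced goal elements vanish. -/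
lemma wd_StepB (Δ : A →ₐ[ℂ] A ⊗[ℂ] A) (hco : IsCoassoc Δ) (φ ψ : A →ₗ[ℂ] ℂ)
    (hl : ∀ z : A, sliceR φ (Δ z) = φ z • (1 : A))
    (hr : ∀ z : A, sliceL ψ (Δ z) = ψ z • (1 : A))
    (hψf : IsFaithful ψ)
    (n : ℕ) (a b : Fin n → A)
    (h0 : ∑ i, sliceR φ (Δ (a i) * ((1 : A) ⊗ₜ[ℂ] b i)) = 0) (p : A) :
    ∑ i, sliceR φ (((1:A) ⊗ₜ[ℂ] sliceL ψ ((p ⊗ₜ[ℂ] (1:A)) * Δ (a i))) * Δ (b i)) = 0 := by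
  apply hψf.1
  intro c
  rw [Finset.mul_sum, map_sum]
  have key : ∀ i, ψ (c * sliceR φ (((1:A) ⊗ₜ[ℂ] sliceL ψ ((p ⊗ₜ[ℂ] (1:A)) * Δ (a i))) * Δ (b i)))
      = wdPair ψ φ ((c ⊗ₜ[ℂ] sliceL ψ ((p ⊗ₜ[ℂ] (1:A)) * Δ (a i))) * Δ (b i)) := by
    intro i
    rw [← wd_L0]
    congr 1
    rw [← mul_assoc, Algebra.TensorProduct.tmul_mul_tmul, mul_one, one_mul]
  rw [Finset.sum_congr rfl fun i _ => key i]
  exact wd_StepA Δ hco φ ψ hl hr n a b h0 c p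

end WDAux4


section WDAux5

variable {A : Type*} [Ring A] [Algebra ℂ A]

/-- `L₁((z⊗w)⊗(u⊗v)) = φ(wv)·(z⊗u)`. -/
def wdL1 (φ : A →ₗ[ℂ] ℂ) : (A ⊗[ℂ] A) ⊗[ℂ] (A ⊗[ℂ] A) →ₗ[ℂ] A ⊗[ℂ] A :=
  (TensorProduct.rid ℂ (A ⊗[ℂ] A)).toLinearMap ∘ₗ
    TensorProduct.map LinearMap.id (φ ∘ₗ LinearMap.mul' ℂ A) ∘ₗ
    (TensorProduct.tensorTensorTensorComm ℂ A A A A).toLinearMap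

@[simp] lemma wdL1_tmul (φ : A →ₗ[ℂ] ℂ) (z w u v : A) :
    wdL1 φ ((z ⊗ₜ[ℂ] w) ⊗ₜ[ℂ] (u ⊗ₜ[ℂ] v)) = φ (w * v) • (z ⊗ₜ[ℂ] u) := by
  simp [wdL1, TensorProduct.tensorTensorTensorComm_tmul]

lemma wd_C1 (φ ω : A →ₗ[ℂ] ℂ) (s t : A ⊗[ℂ] A) :
    sliceL ω (wdL1 φ (s ⊗ₜ[ℂ] t)) = sliceR φ (((1:A) ⊗ₜ[ℂ] sliceL ω s) * t) := by
  induction s using TensorProduct.induction_on with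
  | zero => simp [TensorProduct.zero_tmul]
  | tmul z w =>
      induction t using TensorProduct.induction_on with
      | zero => simp [TensorProduct.tmul_zero]
      | tmul u v =>
          simp [Algebra.TensorProduct.tmul_mul_tmul, smul_mul_assoc, smul_smul, mul_comm]
      | add t1 t2 h1 h2 => simp [TensorProduct.tmul_add, mul_add, h1, h2]
  | add s1 s2 h1 h2 =>
      simp only [TensorProduct.add_tmul, map_add, h1, h2, tmul_add, add_mul]

lemma wd_sliceComm (θ ω : A →ₗ[ℂ] ℂ) (x : A ⊗[ℂ] A) :
    θ (sliceL ω x) = ω (sliceR θ x) := by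
  induction x using TensorProduct.induction_on with
  | zero => simp
  | tmul u v => simp [mul_comm]
  | add x1 x2 h1 h2 => simp [h1, h2]

/-- Separation: if all left slices against the functionals `ψ(p·)` vanish
and `ψ` is faithful, the tensor vanishes. -/
lemma wd_sep (ψ : A →ₗ[ℂ] ℂ)
    (hf : ∀ y : A, (∀ x : A, ψ (x * y) = 0) → y = 0)
    (x : A ⊗[ℂ] A)
    (h : ∀ p : A, sliceL (ψ ∘ₗ LinearMap.mulLeft ℂ p) x = 0) : x = 0 := by
  classical
  set B := Module.Basis.ofVectorSpace ℂ A with hB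
  have key : ∀ j, sliceR (B.coord j) x = 0 := by
    intro j
    apply hf
    intro p
    have h2 := congrArg (B.coord j) (h p)
    rw [wd_sliceComm] at h2
    simpa using h2
  have hrep : ∀ ij : (↑(Module.Basis.ofVectorSpaceIndex ℂ A)) × (↑(Module.Basis.ofVectorSpaceIndex ℂ A)),
      ((B.tensorProduct B).repr x) ij = 0 := by
    rintro ⟨i, j⟩
    have hx : ∀ y : A ⊗[ℂ] A, ((B.tensorProduct B).repr y) (i, j)
        = B.repr (sliceR (B.coord j) y) i := by
      intro y
      induction y using TensorProduct.induction_on with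
      | zero => simp
      | tmul u v =>
          simp [Module.Basis.tensorProduct_repr_tmul_apply, Module.Basis.coord_apply, smul_eq_mul, mul_comm]
      | add y1 y2 h1 h2 => simp [h1, h2]
    rw [hx x, key j]
    simp
  have hz : (B.tensorProduct B).repr x = 0 := by
    ext ij
    simpa using hrep ij
  exact ((B.tensorProduct B).repr.map_eq_zero_iff).mp hz

/-- Step C: the tensor `𝔗` vanishes. -/
lemma wd_StepC (Δ : A →ₐ[ℂ] A ⊗[ℂ] A) (hco : IsCoassoc Δ) (φ ψ : A →ₗ[ℂ] ℂ)
    (hl : ∀ z : A, sliceR φ (Δ z) = φ z • (1 : A))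
    (hr : ∀ z : A, sliceL ψ (Δ z) = ψ z • (1 : A))
    (hψf : IsFaithful ψ)
    (n : ℕ) (a b : Fin n → A)
    (h0 : ∑ i, sliceR φ (Δ (a i) * ((1 : A) ⊗ₜ[ℂ] b i)) = 0) :
    (∑ i, wdL1 φ (Δ (a i) ⊗ₜ[ℂ] Δ (b i))) = 0 := by
  apply wd_sep ψ hψf.1
  intro p
  rw [map_sum]
  have key : ∀ i, sliceL (ψ ∘ₗ LinearMap.mulLeft ℂ p) (wdL1 φ (Δ (a i) ⊗ₜ[ℂ] Δ (b i)))
      = sliceR φ (((1:A) ⊗ₜ[ℂ] sliceL ψ ((p ⊗ₜ[ℂ] (1:A)) * Δ (a i))) * Δ (b i)) := by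
    intro i
    rw [wd_C1, wd_sliceL_mulLeft]
  rw [Finset.sum_congr rfl fun i _ => key i]
  exact wd_StepB Δ hco φ ψ hl hr hψf n a b h0 p

end WDAux5


section WDAux6

variable {A : Type*} [Ring A] [Algebra ℂ A]

@[simp] lemma wd_T2'_tmul (Δ : A →ₐ[ℂ] A ⊗[ℂ] A) (x y : A) :
    T2' Δ (x ⊗ₜ[ℂ] y) = ((1:A) ⊗ₜ[ℂ] x) * Δ y := by
  simp [T2']

/-- `W_s(v) = (id⊗φ)(s·(1⊗v))`. -/
def wdW (φ : A →ₗ[ℂ] ℂ) (s : A ⊗[ℂ] A) : A →ₗ[ℂ] A :=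
  sliceR φ ∘ₗ LinearMap.mulLeft ℂ s ∘ₗ TensorProduct.mk ℂ A A 1

@[simp] lemma wdW_apply (φ : A →ₗ[ℂ] ℂ) (s : A ⊗[ℂ] A) (v : A) :
    wdW φ s v = sliceR φ (s * ((1:A) ⊗ₜ[ℂ] v)) := rfl

lemma wdW_add_s (φ : A →ₗ[ℂ] ℂ) (s₁ s₂ : A ⊗[ℂ] A) (v : A) :
    wdW φ (s₁ + s₂) v = wdW φ s₁ v + wdW φ s₂ v := by
  simp [add_mul]

/-- `G_s((Y)⊗v) = (1 ⊗ W_s(v))·Y`. -/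
def wdG (φ : A →ₗ[ℂ] ℂ) (s : A ⊗[ℂ] A) : (A ⊗[ℂ] A) ⊗[ℂ] A →ₗ[ℂ] A ⊗[ℂ] A :=
  TensorProduct.lift (LinearMap.mk₂ ℂ (fun Y v => ((1:A) ⊗ₜ[ℂ] wdW φ s v) * Y)
    (fun Y₁ Y₂ v => by rw [mul_add])
    (fun r Y v => by rw [mul_smul_comm])
    (fun Y v₁ v₂ => by rw [map_add, TensorProduct.tmul_add, add_mul])
    (fun r Y v => by rw [map_smul, TensorProduct.tmul_smul, smul_mul_assoc]))

@[simp] lemma wdG_tmul (φ : A →ₗ[ℂ] ℂ) (s : A ⊗[ℂ] A) (Y : A ⊗[ℂ] A) (v : A) :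
    wdG φ s (Y ⊗ₜ[ℂ] v) = ((1:A) ⊗ₜ[ℂ] wdW φ s v) * Y := rfl

def wdKap (χ φ : A →ₗ[ℂ] ℂ) (s : A ⊗[ℂ] A) : A ⊗[ℂ] A →ₗ[ℂ] ℂ :=
  wdPair χ φ ∘ₗ LinearMap.mulLeft ℂ s

@[simp] lemma wdKap_apply (χ φ : A →ₗ[ℂ] ℂ) (s r : A ⊗[ℂ] A) :
    wdKap χ φ s r = wdPair χ φ (s * r) := rfl

/-- `(id ⊗ κ)` on `A ⊗ (A⊗A)`. -/
def wdM (κ : A ⊗[ℂ] A →ₗ[ℂ] ℂ) : A ⊗[ℂ] (A ⊗[ℂ] A) →ₗ[ℂ] A :=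
  (TensorProduct.rid ℂ A).toLinearMap ∘ₗ TensorProduct.map LinearMap.id κ

@[simp] lemma wdM_tmul (κ : A ⊗[ℂ] A →ₗ[ℂ] ℂ) (u : A) (r : A ⊗[ℂ] A) :
    wdM κ (u ⊗ₜ[ℂ] r) = κ r • u := by
  simp [wdM]

/-- D-e : `T2'(L₁(s⊗t)) = G_s((Δ⊗id)t)`. -/
lemma wd_De (Δ : A →ₐ[ℂ] A ⊗[ℂ] A) (φ : A →ₗ[ℂ] ℂ) (s t : A ⊗[ℂ] A) :
    T2' Δ (wdL1 φ (s ⊗ₜ[ℂ] t))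
      = wdG φ s (TensorProduct.map Δ.toLinearMap LinearMap.id t) := by
  induction t using TensorProduct.induction_on with
  | zero => simp [TensorProduct.tmul_zero]
  | tmul u v =>
      rw [map_tmul, wdG_tmul, LinearMap.id_coe, id_eq, AlgHom.toLinearMap_apply]
      induction s using TensorProduct.induction_on with
      | zero => simp [TensorProduct.zero_tmul]
      | tmul z w =>
          rw [wdL1_tmul, map_smul, wd_T2'_tmul]
          rw [wdW_apply, Algebra.TensorProduct.tmul_mul_tmul, mul_one, wd_sliceR_tmul]
          rw [TensorProduct.tmul_smul, smul_mul_assoc]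
      | add s1 s2 h1 h2 =>
          rw [TensorProduct.add_tmul, map_add, map_add, h1, h2, wdW_add_s,
            TensorProduct.tmul_add, add_mul]
  | add t1 t2 h1 h2 =>
      rw [TensorProduct.tmul_add, map_add, map_add, h1, h2, map_add, map_add]

end WDAux6


section WDAux7

variable {A : Type*} [Ring A] [Algebra ℂ A]

/-- Df1: `χ(W_s(v₂)·v₁) = (χ⊗φ)(s·(v₁⊗v₂))`. -/
lemma wd_Df1 (χ φ : A →ₗ[ℂ] ℂ) (s : A ⊗[ℂ] A) (v₁ v₂ : A) :
    χ (wdW φ s v₂ * v₁) = wdPair χ φ (s * (v₁ ⊗ₜ[ℂ] v₂)) := by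
  induction s using TensorProduct.induction_on with
  | zero => simp
  | tmul z w =>
      rw [wdW_apply, Algebra.TensorProduct.tmul_mul_tmul, mul_one, wd_sliceR_tmul,
        Algebra.TensorProduct.tmul_mul_tmul, wdPair_tmul, smul_mul_assoc, map_smul]
      simp [mul_comm]
  | add s1 s2 h1 h2 =>
      rw [wdW_add_s, add_mul, map_add, h1, h2, add_mul, map_add]

/-- D-f: `(id⊗χ)(G_s(assoc⁻¹ X)) = (id ⊗ κ_s)(X)`. -/
lemma wd_Df (χ φ : A →ₗ[ℂ] ℂ) (s : A ⊗[ℂ] A) (X : A ⊗[ℂ] (A ⊗[ℂ] A)) :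
    sliceR χ (wdG φ s ((TensorProduct.assoc ℂ A A A).symm X))
      = wdM (wdKap χ φ s) X := by
  induction X using TensorProduct.induction_on with
  | zero => rw [(TensorProduct.assoc ℂ A A A).symm.map_zero, map_zero, map_zero, map_zero]
  | tmul u r =>
      induction r using TensorProduct.induction_on with
      | zero =>
          rw [TensorProduct.tmul_zero, (TensorProduct.assoc ℂ A A A).symm.map_zero, map_zero,
            map_zero]
          exact (map_zero _).symm
      | tmul v₁ v₂ =>
          rw [TensorProduct.assoc_symm_tmul, wdG_tmul, Algebra.TensorProduct.tmul_mul_tmul,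
            one_mul, wd_sliceR_tmul, wdM_tmul, wdKap_apply, wd_Df1]
      | add r1 r2 h1 h2 =>
          rw [TensorProduct.tmul_add, (TensorProduct.assoc ℂ A A A).symm.map_add, map_add,
            map_add, h1, h2, map_add]
  | add X1 X2 h1 h2 =>
      rw [(TensorProduct.assoc ℂ A A A).symm.map_add, map_add, map_add, h1, h2, map_add]

/-- D-b: `(id ⊗ κ_{Δz})((id⊗Δ)t) = (id⊗φ)((1⊗z)·t)`, by left invariance. -/
lemma wd_Db (Δ : A →ₐ[ℂ] A ⊗[ℂ] A) (χ φ : A →ₗ[ℂ] ℂ) (hχ : χ 1 = 1)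
    (hl : ∀ w : A, sliceR φ (Δ w) = φ w • (1 : A)) (z : A) (t : A ⊗[ℂ] A) :
    wdM (wdKap χ φ (Δ z)) (TensorProduct.map LinearMap.id Δ.toLinearMap t)
      = sliceR φ (((1:A) ⊗ₜ[ℂ] z) * t) := by
  have base : ∀ v : A, wdPair χ φ (Δ z * Δ v) = φ (z * v) := by
    intro v
    rw [← map_mul, wdPair_eq_sliceR, hl, map_smul, hχ, smul_eq_mul, mul_one]
  induction t using TensorProduct.induction_on with
  | zero => simp
  | tmul u v =>
      rw [map_tmul, LinearMap.id_coe, id_eq, AlgHom.toLinearMap_apply, wdM_tmul, wdKap_apply,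
        base, Algebra.TensorProduct.tmul_mul_tmul, one_mul, wd_sliceR_tmul]
  | add t1 t2 h1 h2 => rw [map_add, map_add, h1, h2, mul_add, map_add]

/-- Existence of a normalized functional. -/
lemma wd_exists_chi (h1 : (1:A) ≠ 0) : ∃ χ : A →ₗ[ℂ] ℂ, χ 1 = 1 := by
  obtain ⟨q, hq⟩ := Submodule.exists_isCompl (Submodule.span ℂ {(1:A)})
  let e := LinearEquiv.toSpanNonzeroSingleton ℂ A 1 h1
  let pr := Submodule.linearProjOfIsCompl _ q hq
  refine ⟨(e.symm : Submodule.span ℂ {(1:A)} →ₗ[ℂ] ℂ) ∘ₗ pr, ?_⟩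
  have hmem : (1:A) ∈ Submodule.span ℂ {(1:A)} := Submodule.mem_span_singleton_self 1
  have hpr : pr 1 = ⟨1, hmem⟩ := by
    have := Submodule.linearProjOfIsCompl_apply_left hq (⟨1, hmem⟩ : Submodule.span ℂ {(1:A)})
    exact this
  have he : e 1 = ⟨1, hmem⟩ := by
    apply Subtype.ext
    simp [e, LinearEquiv.toSpanNonzeroSingleton]
  calc ((e.symm : Submodule.span ℂ {(1:A)} →ₗ[ℂ] ℂ) ∘ₗ pr) 1
      = e.symm (pr 1) := rfl
    _ = e.symm (e 1) := by rw [hpr, he]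
    _ = 1 := e.symm_apply_apply 1

end WDAux7

/-- If `Σᵢ (id ⊗ φ)(Δ(aᵢ)(1 ⊗ bᵢ)) = 0`, then `Σᵢ (id ⊗ φ)((1 ⊗ aᵢ)Δ(bᵢ)) = 0`. -/
theorem antipode_well_defined_lemma
    (Δ : A →ₐ[ℂ] A ⊗[ℂ] A) (hΔ : IsCoassoc Δ) (hfull : IsFull Δ)
    (φ : A →ₗ[ℂ] ℂ) (hφ : IsLeftIntegral Δ φ) (hφf : IsFaithful φ)
    (ψ : A →ₗ[ℂ] ℂ) (hψ : IsRightIntegral Δ ψ) (hψf : IsFaithful ψ)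
    (n : ℕ) (a b : Fin n → A)
    (h0 : ∑ i, sliceR φ (Δ (a i) * ((1 : A) ⊗ₜ[ℂ] b i)) = 0) :
    ∑ i, sliceR φ (((1 : A) ⊗ₜ[ℂ] a i) * Δ (b i)) = 0 := by
  by_cases h1 : (1:A) = 0
  · have : Subsingleton A := subsingleton_of_zero_eq_one h1.symm
    exact Subsingleton.elim _ _
  obtain ⟨χ, hχ⟩ := wd_exists_chi h1
  have hl := hφ.2
  have hr := hψ.2
  have hT : (∑ i, wdL1 φ (Δ (a i) ⊗ₜ[ℂ] Δ (b i))) = 0 :=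
    wd_StepC Δ hΔ φ ψ hl hr hψf n a b h0
  have key : ∀ i, sliceR φ (((1:A) ⊗ₜ[ℂ] a i) * Δ (b i))
      = sliceR χ (T2' Δ (wdL1 φ (Δ (a i) ⊗ₜ[ℂ] Δ (b i)))) := by
    intro i
    rw [wd_De Δ φ (Δ (a i)) (Δ (b i)), wd_coassoc_symm Δ hΔ (b i), wd_Df χ φ (Δ (a i)),
      wd_Db Δ χ φ hχ hl (a i) (Δ (b i))]
  rw [Finset.sum_congr rfl fun i _ => key i, ← map_sum, ← map_sum, hT, map_zero, map_zero]
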